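/- Characterization of the service rate region when n ≥ k + i: a nonnegative vector λ = (λ_1,…,λ_k) belongs to S_i(n,k) if and only if for every subset A ⊆ [i], k·(Σ_{j∈A} λ_j + Σ_{j=i+1}^k λ_j) + Σ_{j∈[i]\A} λ_j ≤ n + |A|·(k−1). -/

import Mathlib

open Matrix

/-- `R ⊆ [n]` is a recovery set for object `j` under generator matrix `G`:
the standard basis vector `e_j` lies in the span of the columns of `G` indexed by `R`,
and minimally so. -/
def IsRecoverySet {F : Type*} [Field F] {k n : ℕ} (G : Matrix (Fin k) (Fin n) F)
    (j : Fin k) (R : Finset (Fin n)) : Prop :=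
  (Pi.single j 1 : Fin k → F) ∈ Submodule.span F (Gᵀ '' (R : Set (Fin n))) ∧
    ∀ S : Finset (Fin n), S ⊂ R →
      (Pi.single j 1 : Fin k → F) ∉ Submodule.span F (Gᵀ '' (S : Set (Fin n)))

/-- A valid allocation of request rates `lam` to recovery sets: nonnegative weights
`w j R` supported on recovery sets, summing to `lam j` for each object `j`, and
loading each server `l` by at most its unit capacity. -/
def IsValidAllocation {F : Type*} [Field F] {k n : ℕ} (G : Matrix (Fin k) (Fin n) F)
    (lam : Fin k → ℝ) (w : Fin k → Finset (Fin n) → ℝ) : Prop :=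
  (∀ j R, 0 ≤ w j R) ∧
  (∀ j R, ¬ IsRecoverySet G j R → w j R = 0) ∧
  (∀ j, ∑ R : Finset (Fin n), w j R = lam j) ∧
  (∀ l : Fin n, ∑ j : Fin k, ∑ R ∈ Finset.univ.filter (fun R : Finset (Fin n) => l ∈ R),
      w j R ≤ 1)

/-- The service rate region of `G`. -/
def ServiceRegion {F : Type*} [Field F] {k n : ℕ} (G : Matrix (Fin k) (Fin n) F) :
    Set (Fin k → ℝ) :=
  {lam | (∀ j, 0 ≤ lam j) ∧ ∃ w, IsValidAllocation G lam w}

/-- `Gmat M i` = the `k × n` matrix formed by the `i` leftmost (systematic) columns of `M`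
followed by the `n - i` rightmost (parity) columns of `M`. -/
def Gmat {F : Type*} [Field F] {k n : ℕ} (M : Matrix (Fin k) (Fin (k + n)) F) (i : ℕ) :
    Matrix (Fin k) (Fin n) F :=
  Matrix.of fun r l =>
    if (l : ℕ) < i then M r ⟨(l : ℕ), by have := l.isLt; omega⟩
    else M r ⟨k + (l : ℕ), by have := l.isLt; omega⟩


section SRRDecomp
open Finset


lemma srr_decomp_aux (n k : ℕ) :
    ∀ N : ℕ, ∀ (D : ℝ) (v : Fin n → ℝ), 0 ≤ D → (∀ l, 0 ≤ v l) → (∀ l, v l ≤ D) →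
    (∑ l, v l) = k * D →
    (univ.filter (fun l => 0 < v l ∧ v l < D)).card ≤ N →
    ∃ w : Finset (Fin n) → ℝ, (∀ R, 0 ≤ w R) ∧ (∀ R, w R ≠ 0 → R.card = k) ∧
      (∑ R, w R = D) ∧ (∀ l, ∑ R ∈ univ.filter (fun R => l ∈ R), w R = v l) := by
  intro N
  induction N with
  | zero =>
    intro D v hD hv0 hvD hsum hcard
    have hext : ∀ l, v l = 0 ∨ v l = D := by
      intro l
      have : ¬ (0 < v l ∧ v l < D) := by
        intro h
        have : l ∈ univ.filter (fun l => 0 < v l ∧ v l < D) := by simp [h]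
        have := card_pos.mpr ⟨l, this⟩
        omega
      rcases lt_or_eq_of_le (hv0 l) with h1 | h1
      · right; rcases lt_or_eq_of_le (hvD l) with h2 | h2
        · exact absurd ⟨h1, h2⟩ this
        · exact h2
      · left; exact h1.symm
    rcases eq_or_lt_of_le hD with hD0 | hD0
    · refine ⟨0, by simp, by simp, by simp [← hD0], fun l => ?_⟩
      have h1 := hv0 l; have h2 := hvD l
      simp only [Pi.zero_apply, sum_const_zero]
      rw [← hD0] at h2; linarith
    · set T := univ.filter (fun l => v l = D) with hT
      have hTcard : T.card = k := by
        have : ∑ l, v l = T.card * D := by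
          rw [← sum_filter_add_sum_filter_not univ (fun l => v l = D) v]
          have e1 : ∑ l ∈ univ.filter (fun l => v l = D), v l = T.card * D := by
            rw [Finset.sum_congr rfl (fun l hl => (mem_filter.mp hl).2)]
            simp [mul_comm, hT]
          have e2 : ∑ l ∈ univ.filter (fun l => ¬ v l = D), v l = 0 := by
            apply Finset.sum_eq_zero
            intro l hl
            rcases hext l with h | h
            · exact h
            · exact absurd h (mem_filter.mp hl).2
          rw [e1, e2, add_zero]
        rw [hsum] at this
        have h2 := mul_right_cancel₀ (ne_of_gt hD0) this.symm
        exact_mod_cast h2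
      refine ⟨fun R => if R = T then D else 0, ?_, ?_, ?_, ?_⟩
      · intro R; dsimp only; split
        · exact hD
        · exact le_refl 0
      · intro R hR; dsimp only at hR; split at hR
        · subst ‹R = T›; exact hTcard
        · exact absurd rfl hR
      · simp
      · intro l
        rw [Finset.sum_ite_eq' (univ.filter (fun R => l ∈ R)) T (fun _ => D)]
        by_cases hl : l ∈ T
        · rw [if_pos (by simp [hl]), (mem_filter.mp hl).2]
        · rw [if_neg (by simp [hl])]
          rcases hext l with h | h
          · exact h.symm
          · exact absurd (mem_filter.mpr ⟨mem_univ l, h⟩) hl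
  | succ N ih =>
    intro D v hD hv0 hvD hsum hcard
    by_cases hle : (univ.filter (fun l => 0 < v l ∧ v l < D)).card ≤ N
    · exact ih D v hD hv0 hvD hsum hle
    · -- there is a fractional coordinate a
      have hpos : 0 < (univ.filter (fun l => 0 < v l ∧ v l < D)).card := by omega
      obtain ⟨a, ha⟩ := card_pos.mp hpos
      have haf : 0 < v a ∧ v a < D := (mem_filter.mp ha).2
      have hDpos : 0 < D := lt_trans haf.1 haf.2
      -- there is a second fractional coordinate b
      have hb : ∃ b, b ≠ a ∧ (0 < v b ∧ v b < D) := by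
        by_contra h
        push_neg at h
        set T := univ.filter (fun l => l ≠ a ∧ v l = D) with hT
        have hsum2 : ∑ l, v l = v a + T.card * D := by
          rw [← Finset.add_sum_erase _ v (mem_univ a)]
          congr 1
          rw [← sum_filter_add_sum_filter_not (univ.erase a) (fun l => v l = D) v]
          have e1 : ∑ l ∈ (univ.erase a).filter (fun l => v l = D), v l = T.card * D := by
            have : (univ.erase a).filter (fun l => v l = D) = T := by
              ext l; simp [hT, mem_erase, and_comm]
            rw [this, Finset.sum_congr rfl (fun l hl => (mem_filter.mp hl).2.2)]
            simp [mul_comm]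
          have e2 : ∑ l ∈ (univ.erase a).filter (fun l => ¬ v l = D), v l = 0 := by
            apply Finset.sum_eq_zero
            intro l hl
            simp only [mem_filter, mem_erase] at hl
            rcases lt_or_eq_of_le (hv0 l) with h1 | h1
            · exfalso
              rcases lt_or_eq_of_le (hvD l) with h2 | h2
              · exact absurd (h l hl.1.1 h1) (not_le.mpr h2)
              · exact hl.2 h2
            · exact h1.symm
          rw [e1, e2, add_zero]
        rw [hsum] at hsum2
        -- k * D = v a + T.card * D with 0 < v a < D : contradiction
        have h1 : (T.card : ℝ) * D < (k : ℝ) * D := by linarith [haf.1]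
        have h2 : (k : ℝ) * D < (T.card + 1 : ℝ) * D := by
          rw [add_mul, one_mul]; linarith [haf.2]
        have h1' : T.card < k := by
          have := lt_of_mul_lt_mul_right h1 hDpos.le; exact_mod_cast this
        have h2' : k < T.card + 1 := by
          have := lt_of_mul_lt_mul_right h2 hDpos.le
          have : (k : ℝ) < (T.card : ℝ) + 1 := by push_cast at this ⊢; linarith
          exact_mod_cast this
        omega
      obtain ⟨b, hba, hbf⟩ := hb
      have hab : a ≠ b := fun h => hba h.symm
      set ε1 := min (D - v a) (v b) with hep1
      set ε2 := min (v a) (D - v b) with hep2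
      have hep1pos : 0 < ε1 := lt_min (by linarith [haf.2]) hbf.1
      have hep2pos : 0 < ε2 := lt_min haf.1 (by linarith [hbf.2])
      have hep1a : ε1 ≤ D - v a := min_le_left _ _
      have hep1b : ε1 ≤ v b := min_le_right _ _
      have hep2a : ε2 ≤ v a := min_le_left _ _
      have hep2b : ε2 ≤ D - v b := min_le_right _ _
      set x1 : Fin n → ℝ := fun l => if l = a then v a + ε1 else if l = b then v b - ε1 else v l with hx1
      set x2 : Fin n → ℝ := fun l => if l = a then v a - ε2 else if l = b then v b + ε2 else v l with hx2
      have hx1a : x1 a = v a + ε1 := by simp [hx1]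
      have hx1b : x1 b = v b - ε1 := by simp [hx1, hba]
      have hx2a : x2 a = v a - ε2 := by simp [hx2]
      have hx2b : x2 b = v b + ε2 := by simp [hx2, hba]
      have hx1v : ∀ l, l ≠ a → l ≠ b → x1 l = v l := by intro l h1 h2; simp [hx1, h1, h2]
      have hx2v : ∀ l, l ≠ a → l ≠ b → x2 l = v l := by intro l h1 h2; simp [hx2, h1, h2]
      have hx1_0 : ∀ l, 0 ≤ x1 l := by
        intro l; simp only [hx1]; split_ifs with h1 h2
        · linarith [haf.1]
        · linarith
        · exact hv0 l
      have hx1_D : ∀ l, x1 l ≤ D := by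
        intro l; simp only [hx1]; split_ifs with h1 h2
        · linarith
        · linarith [hbf.2]
        · exact hvD l
      have hx2_0 : ∀ l, 0 ≤ x2 l := by
        intro l; simp only [hx2]; split_ifs with h1 h2
        · linarith
        · linarith [hbf.1]
        · exact hv0 l
      have hx2_D : ∀ l, x2 l ≤ D := by
        intro l; simp only [hx2]; split_ifs with h1 h2
        · linarith [haf.2]
        · linarith
        · exact hvD l
      have hptw1 : ∀ l, x1 l = v l + ((if l = a then ε1 else 0) + (if l = b then -ε1 else 0)) := by
        intro l; simp only [hx1]; split_ifs with h1 h2 h3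
        · subst h1; exact absurd h2 hab
        · subst h1; ring
        · subst h3; ring
        · ring
      have hptw2 : ∀ l, x2 l = v l + ((if l = a then -ε2 else 0) + (if l = b then ε2 else 0)) := by
        intro l; simp only [hx2]; split_ifs with h1 h2 h3
        · subst h1; exact absurd h2 hab
        · subst h1; ring
        · subst h3; ring
        · ring
      have hsx1 : ∑ l, x1 l = k * D := by
        rw [Finset.sum_congr rfl (fun l _ => hptw1 l), Finset.sum_add_distrib,
          Finset.sum_add_distrib, Fintype.sum_ite_eq' a (fun _ => ε1),
          Fintype.sum_ite_eq' b (fun _ => -ε1), hsum]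
        ring
      have hsx2 : ∑ l, x2 l = k * D := by
        rw [Finset.sum_congr rfl (fun l _ => hptw2 l), Finset.sum_add_distrib,
          Finset.sum_add_distrib, Fintype.sum_ite_eq' a (fun _ => -ε2),
          Fintype.sum_ite_eq' b (fun _ => ε2), hsum]
        ring
      have hbmem : b ∈ univ.filter (fun l => 0 < v l ∧ v l < D) :=
        mem_filter.mpr ⟨mem_univ _, hbf⟩
      have hcard1 : (univ.filter (fun l => 0 < x1 l ∧ x1 l < D)).card ≤ N := by
        rcases le_total (D - v a) (v b) with hm | hm
        · have hxa : x1 a = D := by rw [hx1a, hep1, min_eq_left hm]; ring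
          have hsub : (univ.filter (fun l => 0 < x1 l ∧ x1 l < D)) ⊆
              (univ.filter (fun l => 0 < v l ∧ v l < D)).erase a := by
            intro l hl
            have hlf := (mem_filter.mp hl).2
            have hla : l ≠ a := by rintro rfl; rw [hxa] at hlf; exact lt_irrefl _ hlf.2
            refine mem_erase.mpr ⟨hla, mem_filter.mpr ⟨mem_univ _, ?_⟩⟩
            by_cases hlb : l = b
            · subst hlb; exact hbf
            · rw [hx1v l hla hlb] at hlf; exact hlf
          have := card_le_card hsub
          rw [card_erase_of_mem ha] at this
          omega
        · have hxb : x1 b = 0 := by rw [hx1b, hep1, min_eq_right hm]; ring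
          have hsub : (univ.filter (fun l => 0 < x1 l ∧ x1 l < D)) ⊆
              (univ.filter (fun l => 0 < v l ∧ v l < D)).erase b := by
            intro l hl
            have hlf := (mem_filter.mp hl).2
            have hlb : l ≠ b := by rintro rfl; rw [hxb] at hlf; exact lt_irrefl _ hlf.1
            refine mem_erase.mpr ⟨hlb, mem_filter.mpr ⟨mem_univ _, ?_⟩⟩
            by_cases hla : l = a
            · subst hla; exact haf
            · rw [hx1v l hla hlb] at hlf; exact hlf
          have := card_le_card hsub
          rw [card_erase_of_mem hbmem] at this
          omega
      have hcard2 : (univ.filter (fun l => 0 < x2 l ∧ x2 l < D)).card ≤ N := by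
        rcases le_total (v a) (D - v b) with hm | hm
        · have hxa : x2 a = 0 := by rw [hx2a, hep2, min_eq_left hm]; ring
          have hsub : (univ.filter (fun l => 0 < x2 l ∧ x2 l < D)) ⊆
              (univ.filter (fun l => 0 < v l ∧ v l < D)).erase a := by
            intro l hl
            have hlf := (mem_filter.mp hl).2
            have hla : l ≠ a := by rintro rfl; rw [hxa] at hlf; exact lt_irrefl _ hlf.1
            refine mem_erase.mpr ⟨hla, mem_filter.mpr ⟨mem_univ _, ?_⟩⟩
            by_cases hlb : l = b
            · subst hlb; exact hbf
            · rw [hx2v l hla hlb] at hlf; exact hlf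
          have := card_le_card hsub
          rw [card_erase_of_mem ha] at this
          omega
        · have hxb : x2 b = D := by rw [hx2b, hep2, min_eq_right hm]; ring
          have hsub : (univ.filter (fun l => 0 < x2 l ∧ x2 l < D)) ⊆
              (univ.filter (fun l => 0 < v l ∧ v l < D)).erase b := by
            intro l hl
            have hlf := (mem_filter.mp hl).2
            have hlb : l ≠ b := by rintro rfl; rw [hxb] at hlf; exact lt_irrefl _ hlf.2
            refine mem_erase.mpr ⟨hlb, mem_filter.mpr ⟨mem_univ _, ?_⟩⟩
            by_cases hla : l = a
            · subst hla; exact haf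
            · rw [hx2v l hla hlb] at hlf; exact hlf
          have := card_le_card hsub
          rw [card_erase_of_mem hbmem] at this
          omega
      obtain ⟨w1, hw1_0, hw1_s, hw1_sum, hw1_load⟩ := ih D x1 hD hx1_0 hx1_D hsx1 hcard1
      obtain ⟨w2, hw2_0, hw2_s, hw2_sum, hw2_load⟩ := ih D x2 hD hx2_0 hx2_D hsx2 hcard2
      have hs : (0:ℝ) < ε1 + ε2 := by linarith
      have hsne : (ε1 + ε2) ≠ 0 := ne_of_gt hs
      refine ⟨fun R => (ε2 / (ε1 + ε2)) * w1 R + (ε1 / (ε1 + ε2)) * w2 R, ?_, ?_, ?_, ?_⟩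
      · intro R
        have := hw1_0 R; have := hw2_0 R
        positivity
      · intro R hR
        by_cases h1 : w1 R = 0
        · have h2 : w2 R ≠ 0 := by
            intro h2; apply hR; dsimp only; rw [h1, h2]; ring
          exact hw2_s R h2
        · exact hw1_s R h1
      · rw [Finset.sum_add_distrib, ← Finset.mul_sum, ← Finset.mul_sum, hw1_sum, hw2_sum]
        field_simp
        ring
      · intro l
        rw [Finset.sum_add_distrib, ← Finset.mul_sum, ← Finset.mul_sum, hw1_load l, hw2_load l]
        by_cases h1 : l = a
        · subst h1; rw [hx1a, hx2a]; field_simp; ring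
        · by_cases h2 : l = b
          · subst h2; rw [hx1b, hx2b]; field_simp; ring
          · rw [hx1v l h1 h2, hx2v l h1 h2]
            field_simp
            ring


lemma srr_sum_filter_lt_eq_range {A : Type*} [AddCommMonoid A] (m i : ℕ) (h : i ≤ m) (f : ℕ → A) :
    ∑ l ∈ Finset.univ.filter (fun l : Fin m => (l : ℕ) < i), f (l : ℕ)
      = ∑ t ∈ Finset.range i, f t := by
  by_cases hm : m = 0
  · subst hm
    have : i = 0 := by omega
    subst this
    simp
  · have hm0 : 0 < m := Nat.pos_of_ne_zero hm
    apply Finset.sum_nbij' (i := fun l : Fin m => (l : ℕ))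
      (j := fun t => (⟨t % m, Nat.mod_lt _ hm0⟩ : Fin m))
    · intro a ha
      simp only [mem_filter] at ha
      simp [ha.2]
    · intro t ht
      simp only [Finset.mem_range] at ht
      simp only [mem_filter, mem_univ, true_and]
      rw [Nat.mod_eq_of_lt (lt_of_lt_of_le ht h)]
      exact ht
    · intro a ha
      apply Fin.ext
      simp [Nat.mod_eq_of_lt a.isLt]
    · intro t ht
      simp only [Finset.mem_range] at ht
      simp [Nat.mod_eq_of_lt (lt_of_lt_of_le ht h)]
    · intro a _; rfl

lemma srr_card_filter_lt (m i : ℕ) (h : i ≤ m) :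
    (Finset.univ.filter (fun l : Fin m => (l : ℕ) < i)).card = i := by
  have h2 := srr_sum_filter_lt_eq_range (A := ℕ) m i h (fun _ => 1)
  rw [Finset.sum_const, Finset.sum_const, Finset.card_range, smul_eq_mul, smul_eq_mul,
    mul_one, mul_one] at h2
  exact h2

lemma srr_card_filter_ge (m i : ℕ) (h : i ≤ m) :
    (Finset.univ.filter (fun l : Fin m => ¬ (l : ℕ) < i)).card = m - i := by
  have h2 := Finset.card_filter_add_card_filter_not (s := (univ : Finset (Fin m)))
    (p := fun l : Fin m => (l : ℕ) < i)
  rw [srr_card_filter_lt m i h] at h2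
  simp only [Finset.card_univ, Fintype.card_fin] at h2
  omega

end SRRDecomp

namespace SRRAux

def colMap (k i : ℕ) {n : ℕ} (l : Fin n) : Fin (k + n) :=
  if (l : ℕ) < i then ⟨(l : ℕ), by have := l.isLt; omega⟩
  else ⟨k + (l : ℕ), by have := l.isLt; omega⟩

lemma colMap_inj (k i : ℕ) {n : ℕ} : Function.Injective (colMap k i (n := n)) := by
  intro x y h
  unfold colMap at h
  rw [Fin.ext_iff]
  split_ifs at h <;> simp only [Fin.mk.injEq] at h <;> omega

lemma colMap_lt {k i n : ℕ} (l : Fin n) (h : (l : ℕ) < i) :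
    (colMap k i l : ℕ) = (l : ℕ) := by simp [colMap, h]

lemma colMap_ge {k i n : ℕ} (l : Fin n) (h : ¬ (l : ℕ) < i) :
    (colMap k i l : ℕ) = k + (l : ℕ) := by simp [colMap, h]

lemma Gmat_col {F : Type*} [Field F] {k n : ℕ} (M : Matrix (Fin k) (Fin (k + n)) F)
    (i : ℕ) (l : Fin n) : (Gmat M i)ᵀ l = Mᵀ (colMap k i l) := by
  funext r
  simp only [Matrix.transpose_apply, Gmat, Matrix.of_apply, colMap]
  split_ifs <;> rfl

section

variable {F : Type*} [Field F] {k n : ℕ} (M : Matrix (Fin k) (Fin (k + n)) F)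

/-- Any at most `k` columns of an MDS matrix are linearly independent, in "support" form. -/
lemma mds_indep
    (hMDS : ∀ S : Finset (Fin (k + n)), S.card = k →
      LinearIndependent F (fun l : S => Mᵀ (l : Fin (k + n))))
    (g : Fin (k + n) → F) (S : Finset (Fin (k + n))) (hS : S.card ≤ k)
    (hsupp : ∀ l, l ∉ S → g l = 0) (hsum : ∑ l, g l • Mᵀ l = 0) : ∀ l, g l = 0 := by
  obtain ⟨T, hST, _, hTc⟩ := Finset.exists_subsuperset_card_eq (S.subset_univ) hS
    (by rw [Finset.card_univ, Fintype.card_fin]; omega)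
  have hind := hMDS T hTc
  rw [Fintype.linearIndependent_iff] at hind
  have hzero : ∑ l : T, g l • Mᵀ (l : Fin (k + n)) = 0 := by
    rw [Finset.sum_coe_sort T (fun l => g l • Mᵀ l)]
    rw [← hsum]
    apply Finset.sum_subset (T.subset_univ)
    intro x _ hx
    rw [hsupp x (fun hxS => hx (hST hxS)), zero_smul]
  intro l
  by_cases hl : l ∈ T
  · exact hind (fun l : T => g l) hzero ⟨l, hl⟩
  · exact hsupp l (fun hlS => hl (hST hlS))

variable {i : ℕ}

lemma ej_eq (hsys : ∀ j : Fin k, ∀ r : Fin k, M r (Fin.castAdd n j) = if r = j then (1 : F) else 0)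
    (j : Fin k) : (Pi.single j 1 : Fin k → F) = Mᵀ (Fin.castAdd n j) := by
  funext r
  rw [Matrix.transpose_apply, hsys j r, Pi.single_apply]

lemma image_coe_eq (R : Finset (Fin n)) :
    ((Gmat M i)ᵀ '' (R : Set (Fin n))) = Set.range (fun l : R => Mᵀ (colMap k i (l : Fin n))) := by
  ext x
  constructor
  · rintro ⟨l, hl, rfl⟩
    exact ⟨⟨l, hl⟩, (Gmat_col M i l).symm⟩
  · rintro ⟨l, rfl⟩
    exact ⟨l, l.2, Gmat_col M i l⟩

lemma notin_span
    (hsys : ∀ j : Fin k, ∀ r : Fin k, M r (Fin.castAdd n j) = if r = j then (1 : F) else 0)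
    (hMDS : ∀ S : Finset (Fin (k + n)), S.card = k →
      LinearIndependent F (fun l : S => Mᵀ (l : Fin (k + n))))
    (j : Fin k) (S : Finset (Fin n)) (hcard : S.card < k)
    (hj : (j : ℕ) < i → ∀ l ∈ S, (l : ℕ) ≠ (j : ℕ)) :
    (Pi.single j 1 : Fin k → F) ∉ Submodule.span F ((Gmat M i)ᵀ '' (S : Set (Fin n))) := by
  classical
  intro hmem
  rw [image_coe_eq] at hmem
  rw [Submodule.mem_span_range_iff_exists_fun] at hmem
  obtain ⟨c, hc⟩ := hmem
  set jM : Fin (k + n) := Fin.castAdd n j with hjM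
  -- the combination coefficients as a function on all of Fin (k+n)
  set g : Fin (k + n) → F := fun m =>
    (if m = jM then (-1 : F) else 0) +
      ∑ l ∈ S.attach.filter (fun l => colMap k i l.1 = m), c l with hg
  have hfiber_jM : S.attach.filter (fun l => colMap k i l.1 = jM) = ∅ := by
    rw [Finset.filter_eq_empty_iff]
    intro l _
    intro hl
    have hjMval : (jM : ℕ) = (j : ℕ) := rfl
    by_cases hli : (l.1 : ℕ) < i
    · have h2 := colMap_lt (k := k) l.1 hli
      rw [hl, hjMval] at h2
      have hji : (j : ℕ) < i := by omega
      exact hj hji l.1 l.2 (by omega)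
    · have h2 := colMap_ge (k := k) l.1 hli
      rw [hl, hjMval] at h2
      have := j.isLt
      omega
  have hgjM : g jM = -1 := by
    simp [hg, hfiber_jM]
  have hzero : ∀ m, g m = 0 := by
    apply mds_indep M hMDS g (insert jM (S.image (colMap k i)))
    · calc (insert jM (S.image (colMap k i))).card ≤ (S.image (colMap k i)).card + 1 :=
            Finset.card_insert_le _ _
        _ = S.card + 1 := by rw [Finset.card_image_of_injective _ (colMap_inj k i)]
        _ ≤ k := by omega
    · intro m hm
      simp only [Finset.mem_insert, Finset.mem_image, not_or, not_exists] at hm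
      rw [hg]
      dsimp only
      rw [if_neg hm.1]
      rw [Finset.filter_eq_empty_iff.mpr, Finset.sum_empty, add_zero]
      intro l _
      intro hl
      exact hm.2 l.1 ⟨l.2, hl⟩
    · have e1 : ∑ m, ((if m = jM then (-1 : F) else 0) • Mᵀ m) = -Mᵀ jM := by
        simp only [ite_smul, zero_smul]
        rw [Fintype.sum_ite_eq' jM (fun m => (-1 : F) • Mᵀ m), neg_smul, one_smul]
      have e2 : ∑ m, (∑ l ∈ S.attach.filter (fun l => colMap k i l.1 = m), c l) • Mᵀ m
          = Pi.single j 1 := by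
        calc ∑ m, (∑ l ∈ S.attach.filter (fun l => colMap k i l.1 = m), c l) • Mᵀ m
            = ∑ m, ∑ l ∈ S.attach.filter (fun l => colMap k i l.1 = m), c l • Mᵀ m :=
              Finset.sum_congr rfl (fun m _ => Finset.sum_smul)
          _ = ∑ m, ∑ l ∈ S.attach.filter (fun l => colMap k i l.1 = m), c l • Mᵀ (colMap k i l.1) := by
              apply Finset.sum_congr rfl; intro m _
              apply Finset.sum_congr rfl; intro l hl
              rw [(Finset.mem_filter.mp hl).2]
          _ = ∑ l ∈ S.attach, c l • Mᵀ (colMap k i l.1) :=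
              Finset.sum_fiberwise_of_maps_to (fun l _ => Finset.mem_univ _) _
          _ = ∑ l : {x // x ∈ S}, c l • Mᵀ (colMap k i l.1) := by rw [Finset.univ_eq_attach]
          _ = Pi.single j 1 := hc
      calc ∑ m, g m • Mᵀ m
          = ∑ m, ((if m = jM then (-1 : F) else 0) • Mᵀ m
              + (∑ l ∈ S.attach.filter (fun l => colMap k i l.1 = m), c l) • Mᵀ m) := by
            apply Finset.sum_congr rfl; intro m _; rw [hg]; dsimp only; rw [add_smul]
        _ = -Mᵀ jM + Pi.single j 1 := by rw [Finset.sum_add_distrib, e1, e2]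
        _ = 0 := by rw [ej_eq M hsys j, hjM]; exact neg_add_cancel _
  have := hzero jM
  rw [hgjM] at this
  exact one_ne_zero (neg_eq_zero.mp this)

set_option maxHeartbeats 1000000 in
lemma in_span
    (hMDS : ∀ S : Finset (Fin (k + n)), S.card = k →
      LinearIndependent F (fun l : S => Mᵀ (l : Fin (k + n))))
    (hk : 1 ≤ k) (j : Fin k) (R : Finset (Fin n)) (hR : R.card = k) :
    (Pi.single j 1 : Fin k → F) ∈ Submodule.span F ((Gmat M i)ᵀ '' (R : Set (Fin n))) := by
  have himg : (R.image (colMap k i)).card = k := by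
    rw [Finset.card_image_of_injective _ (colMap_inj k i), hR]
  have hind0 := hMDS _ himg
  have hind : LinearIndependent F (fun l : R => Mᵀ (colMap k i (l : Fin n))) := by
    have hinj : Function.Injective
        (fun l : R => (⟨colMap k i (l : Fin n), Finset.mem_image_of_mem _ l.2⟩ :
          {x // x ∈ R.image (colMap k i)})) := by
      intro x y h
      rw [Subtype.ext_iff] at h
      exact Subtype.ext (colMap_inj k i h)
    exact hind0.comp _ hinj
  haveI : Nonempty {x // x ∈ R} := by
    rw [Finset.nonempty_coe_sort]
    exact Finset.card_pos.mp (by omega)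
  have hspan : Submodule.span F (Set.range (fun l : R => Mᵀ (colMap k i (l : Fin n)))) = ⊤ := by
    apply hind.span_eq_top_of_card_eq_finrank
    rw [Fintype.card_coe, hR, Module.finrank_fintype_fun_eq_card, Fintype.card_fin]
  rw [image_coe_eq, hspan]
  exact Submodule.mem_top

lemma recov_of_card
    (hsys : ∀ j : Fin k, ∀ r : Fin k, M r (Fin.castAdd n j) = if r = j then (1 : F) else 0)
    (hMDS : ∀ S : Finset (Fin (k + n)), S.card = k →
      LinearIndependent F (fun l : S => Mᵀ (l : Fin (k + n))))
    (hk : 1 ≤ k) (j : Fin k) (R : Finset (Fin n)) (hR : R.card = k)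
    (hj : (j : ℕ) < i → ∀ l ∈ R, (l : ℕ) ≠ (j : ℕ)) :
    IsRecoverySet (Gmat M i) j R := by
  constructor
  · exact in_span M hMDS hk j R hR
  · intro S hS
    apply notin_span M hsys hMDS j S
    · have := Finset.card_lt_card hS
      omega
    · intro hji l hl
      exact hj hji l (hS.1 hl)

lemma recov_singleton
    (hsys : ∀ j : Fin k, ∀ r : Fin k, M r (Fin.castAdd n j) = if r = j then (1 : F) else 0)
    (hMDS : ∀ S : Finset (Fin (k + n)), S.card = k →
      LinearIndependent F (fun l : S => Mᵀ (l : Fin (k + n))))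
    (hk : 1 ≤ k) (j : Fin k) (hji : (j : ℕ) < i) (hjn : (j : ℕ) < n) :
    IsRecoverySet (Gmat M i) j {(⟨(j : ℕ), hjn⟩ : Fin n)} := by
  constructor
  · apply Submodule.subset_span
    refine ⟨(⟨(j : ℕ), hjn⟩ : Fin n), by simp, ?_⟩
    rw [Gmat_col]
    have : colMap k i (⟨(j : ℕ), hjn⟩ : Fin n) = Fin.castAdd n j := by
      apply Fin.ext
      rw [colMap_lt (⟨(j : ℕ), hjn⟩ : Fin n) hji]
      rfl
    rw [this, ← ej_eq M hsys j]
  · intro S hS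
    have hSempty : S = ∅ := by
      rw [← Finset.subset_empty]
      intro x hx
      rcases Finset.mem_singleton.mp (hS.1 hx) with rfl
      exfalso
      apply hS.2
      intro y hy
      rcases Finset.mem_singleton.mp hy with rfl
      exact hx
    subst hSempty
    apply notin_span M hsys hMDS j ∅ (by simp; omega)
    simp

lemma card_ge_of_mem_span
    (hsys : ∀ j : Fin k, ∀ r : Fin k, M r (Fin.castAdd n j) = if r = j then (1 : F) else 0)
    (hMDS : ∀ S : Finset (Fin (k + n)), S.card = k →
      LinearIndependent F (fun l : S => Mᵀ (l : Fin (k + n))))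
    (j : Fin k) (R : Finset (Fin n))
    (hmem : (Pi.single j 1 : Fin k → F) ∈ Submodule.span F ((Gmat M i)ᵀ '' (R : Set (Fin n))))
    (hj : (j : ℕ) < i → ∀ l ∈ R, (l : ℕ) ≠ (j : ℕ)) : k ≤ R.card := by
  by_contra h
  exact notin_span M hsys hMDS j R (by omega) hj hmem

lemma nonempty_of_mem_span
    (hsys : ∀ j : Fin k, ∀ r : Fin k, M r (Fin.castAdd n j) = if r = j then (1 : F) else 0)
    (hMDS : ∀ S : Finset (Fin (k + n)), S.card = k →
      LinearIndependent F (fun l : S => Mᵀ (l : Fin (k + n))))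
    (hk : 1 ≤ k) (j : Fin k) (R : Finset (Fin n))
    (hmem : (Pi.single j 1 : Fin k → F) ∈ Submodule.span F ((Gmat M i)ᵀ '' (R : Set (Fin n)))) :
    R.Nonempty := by
  rw [Finset.nonempty_iff_ne_empty]
  rintro rfl
  exact notin_span M hsys hMDS j ∅ (by simp; omega) (by simp) hmem

end
end SRRAux

theorem srr_characterization_of_large_n
    {F : Type*} [Field F] [Fintype F] {k n : ℕ} (hk : 2 ≤ k) (hkn : k ≤ n)
    (hq : k + n + 1 ≤ Fintype.card F)
    (M : Matrix (Fin k) (Fin (k + n)) F)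
    (hsys : ∀ j : Fin k, ∀ r : Fin k, M r (Fin.castAdd n j) = if r = j then (1 : F) else 0)
    (hMDS : ∀ S : Finset (Fin (k + n)), S.card = k →
      LinearIndependent F (fun l : S => Mᵀ (l : Fin (k + n))))
    (i : ℕ) (hik : i ≤ k) (hn : k + i ≤ n)
    (lam : Fin k → ℝ) (hlam0 : ∀ j, 0 ≤ lam j) :
    lam ∈ ServiceRegion (Gmat M i : Matrix (Fin k) (Fin n) F) ↔
      ∀ A : Finset (Fin k), (∀ j ∈ A, (j : ℕ) < i) →
        (k : ℝ) * ((∑ j ∈ A, lam j) +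
        ∑ j ∈ Finset.univ.filter (fun j : Fin k => i ≤ (j : ℕ)), lam j) +
      ∑ j ∈ Finset.univ.filter (fun j : Fin k => (j : ℕ) < i ∧ j ∉ A), lam j
          ≤ (n : ℝ) + (A.card : ℝ) * ((k : ℝ) - 1) := by
  classical
  have hk1 : 1 ≤ k := by omega
  have hin : i ≤ n := by omega
  simp only [ServiceRegion, Set.mem_setOf_eq]
  constructor
  · rintro ⟨-, w, hw0, hwrec, hwsum, hwload⟩ A hA
    set yN : ℕ → ℝ := fun m =>
      if h : m < k then (if (⟨m, h⟩ : Fin k) ∈ A ∧ m < i then (k : ℝ) else 1) else 1 with hyN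
    have hk1R : (1:ℝ) ≤ (k:ℝ) := by exact_mod_cast hk1
    have hy1 : ∀ m, (1:ℝ) ≤ yN m := by
      intro m; rw [hyN]; dsimp only
      split_ifs
      · exact hk1R
      · exact le_refl 1
      · exact le_refl 1
    have hy0 : ∀ m, (0:ℝ) ≤ yN m := fun m => le_trans zero_le_one (hy1 m)
    set price : Fin k → ℝ := fun j => if j ∈ A ∨ i ≤ (j:ℕ) then (k:ℝ) else 1 with hprice
    have hpt : ∀ j : Fin k, price j * lam j =
        (if j ∈ A then (k:ℝ) * lam j else 0) + ((if i ≤ (j:ℕ) then (k:ℝ) * lam j else 0)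
          + (if ((j:ℕ) < i ∧ j ∉ A) then lam j else 0)) := by
      intro j
      rw [hprice]; dsimp only
      by_cases h1 : j ∈ A
      · have hji : (j:ℕ) < i := hA j h1
        rw [if_pos (Or.inl h1), if_pos h1, if_neg (by omega), if_neg (fun hc => hc.2 h1)]
        ring
      · by_cases h2 : i ≤ (j:ℕ)
        · rw [if_pos (Or.inr h2), if_neg h1, if_pos h2, if_neg (by omega)]
          ring
        · rw [if_neg (not_or.mpr ⟨h1, h2⟩), if_neg h1, if_neg h2, if_pos ⟨by omega, h1⟩]
          ring
    have hLHS : (k:ℝ) * ((∑ j ∈ A, lam j) +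
          ∑ j ∈ Finset.univ.filter (fun j : Fin k => i ≤ (j : ℕ)), lam j) +
        ∑ j ∈ Finset.univ.filter (fun j : Fin k => (j : ℕ) < i ∧ j ∉ A), lam j
        = ∑ j, price j * lam j := by
      rw [Finset.sum_congr rfl (fun j _ => hpt j), Finset.sum_add_distrib, Finset.sum_add_distrib,
        Fintype.sum_ite_mem A (fun j => (k:ℝ) * lam j),
        ← Finset.sum_filter (fun j : Fin k => i ≤ (j:ℕ)) (fun j => (k:ℝ) * lam j),
        ← Finset.sum_filter (fun j : Fin k => (j:ℕ) < i ∧ j ∉ A) lam,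
        ← Finset.mul_sum, ← Finset.mul_sum, mul_add]
      ring
    have hperterm : ∀ (j : Fin k) (R : Finset (Fin n)),
        price j * w j R ≤ (∑ l ∈ R, yN (l:ℕ)) * w j R := by
      intro j R
      by_cases hz : w j R = 0
      · rw [hz, mul_zero, mul_zero]
      · have hrec : IsRecoverySet (Gmat M i) j R := by
          by_contra hcon; exact hz (hwrec j R hcon)
        apply mul_le_mul_of_nonneg_right _ (hw0 j R)
        have hcard_sum : (R.card : ℝ) ≤ ∑ l ∈ R, yN (l:ℕ) := by
          have h2 := Finset.card_nsmul_le_sum R (fun l : Fin n => yN (l:ℕ)) 1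
            (fun l _ => hy1 (l:ℕ))
          simpa [nsmul_eq_mul] using h2
        have hcard_ge : ((j:ℕ) < i → ∀ l ∈ R, (l:ℕ) ≠ (j:ℕ)) → (k:ℝ) ≤ ∑ l ∈ R, yN (l:ℕ) := by
          intro hcond
          have hge := SRRAux.card_ge_of_mem_span M hsys hMDS j R hrec.1 hcond
          calc (k:ℝ) ≤ (R.card : ℝ) := by exact_mod_cast hge
            _ ≤ _ := hcard_sum
        rw [hprice]; dsimp only
        by_cases h1 : j ∈ A
        · have hji : (j:ℕ) < i := hA j h1
          rw [if_pos (Or.inl h1)]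
          by_cases h2 : (⟨(j:ℕ), by omega⟩ : Fin n) ∈ R
          · have hyv : yN ((j:ℕ)) = (k:ℝ) := by
              rw [hyN]; dsimp only
              rw [dif_pos j.isLt, Fin.eta, if_pos ⟨h1, hji⟩]
            calc (k:ℝ) = yN (((⟨(j:ℕ), by omega⟩ : Fin n)):ℕ) := hyv.symm
              _ ≤ ∑ l ∈ R, yN (l:ℕ) :=
                Finset.single_le_sum (f := fun l : Fin n => yN (l:ℕ)) (fun l _ => hy0 (l:ℕ)) h2
          · apply hcard_ge
            intro _ l hl hlj
            apply h2
            have : l = (⟨(j:ℕ), by omega⟩ : Fin n) := Fin.ext hlj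
            rwa [← this]
        · by_cases h2 : i ≤ (j:ℕ)
          · rw [if_pos (Or.inr h2)]
            exact hcard_ge (fun hji => by omega)
          · rw [if_neg (not_or.mpr ⟨h1, h2⟩)]
            have hne : R.Nonempty := SRRAux.nonempty_of_mem_span M hsys hMDS hk1 j R hrec.1
            have : (1:ℝ) ≤ (R.card : ℝ) := by
              have := Finset.card_pos.mpr hne
              exact_mod_cast this
            linarith [hcard_sum]
    have hswap : ∑ j, ∑ R : Finset (Fin n), (∑ l ∈ R, yN (l:ℕ)) * w j R
        = ∑ l : Fin n, yN (l:ℕ) *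
            (∑ j, ∑ R ∈ Finset.univ.filter (fun R : Finset (Fin n) => l ∈ R), w j R) := by
      have e1 : ∀ (j : Fin k) (R : Finset (Fin n)), (∑ l ∈ R, yN (l:ℕ)) * w j R
          = ∑ l : Fin n, (if l ∈ R then yN (l:ℕ) * w j R else 0) := by
        intro j R
        rw [Fintype.sum_ite_mem R (fun l : Fin n => yN (l:ℕ) * w j R), Finset.sum_mul]
      calc ∑ j, ∑ R : Finset (Fin n), (∑ l ∈ R, yN (l:ℕ)) * w j R
          = ∑ j, ∑ R : Finset (Fin n), ∑ l : Fin n, (if l ∈ R then yN (l:ℕ) * w j R else 0) := by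
            apply Finset.sum_congr rfl; intro j _
            exact Finset.sum_congr rfl (fun R _ => e1 j R)
        _ = ∑ j, ∑ l : Fin n, ∑ R : Finset (Fin n), (if l ∈ R then yN (l:ℕ) * w j R else 0) := by
            apply Finset.sum_congr rfl; intro j _
            exact Finset.sum_comm
        _ = ∑ l : Fin n, ∑ j, ∑ R : Finset (Fin n), (if l ∈ R then yN (l:ℕ) * w j R else 0) :=
            Finset.sum_comm
        _ = ∑ l : Fin n, yN (l:ℕ) *
              (∑ j, ∑ R ∈ Finset.univ.filter (fun R : Finset (Fin n) => l ∈ R), w j R) := by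
            apply Finset.sum_congr rfl; intro l _
            rw [Finset.mul_sum]
            apply Finset.sum_congr rfl; intro j _
            rw [Finset.sum_filter, Finset.mul_sum]
            apply Finset.sum_congr rfl; intro R _
            split_ifs <;> simp
    have hyc : ∑ l : Fin n, yN (l:ℕ) = (n:ℝ) + (A.card:ℝ) * ((k:ℝ) - 1) := by
      rw [← Finset.sum_filter_add_sum_filter_not Finset.univ (fun l : Fin n => (l:ℕ) < i)
        (fun l => yN (l:ℕ))]
      have e1 : ∑ l ∈ Finset.univ.filter (fun l : Fin n => (l:ℕ) < i), yN (l:ℕ)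
          = ∑ j ∈ Finset.univ.filter (fun j : Fin k => (j:ℕ) < i), yN (j:ℕ) := by
        rw [srr_sum_filter_lt_eq_range n i hin yN, srr_sum_filter_lt_eq_range k i hik yN]
      have e2 : ∑ j ∈ Finset.univ.filter (fun j : Fin k => (j:ℕ) < i), yN (j:ℕ)
          = (i:ℝ) + (A.card:ℝ) * ((k:ℝ) - 1) := by
        have e2a : ∀ j ∈ Finset.univ.filter (fun j : Fin k => (j:ℕ) < i),
            yN (j:ℕ) = 1 + (if j ∈ A then (k:ℝ) - 1 else 0) := by
          intro j hj
          have hji := (Finset.mem_filter.mp hj).2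
          rw [hyN]; dsimp only
          rw [dif_pos j.isLt, Fin.eta]
          by_cases h1 : j ∈ A
          · rw [if_pos ⟨h1, hji⟩, if_pos h1]; ring
          · rw [if_neg (fun hc => h1 hc.1), if_neg h1]; ring
        rw [Finset.sum_congr rfl e2a, Finset.sum_add_distrib, Finset.sum_const,
          srr_card_filter_lt k i hik]
        have e2b : ∑ j ∈ Finset.univ.filter (fun j : Fin k => (j:ℕ) < i),
            (if j ∈ A then (k:ℝ) - 1 else 0) = ∑ j ∈ A, ((k:ℝ) - 1) := by
          rw [← Finset.sum_filter]
          apply Finset.sum_congr _ (fun x _ => rfl)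
          ext j
          simp only [Finset.mem_filter, Finset.mem_univ, true_and]
          exact ⟨fun h => h.2, fun h => ⟨hA j h, h⟩⟩
        rw [e2b, Finset.sum_const, nsmul_eq_mul, nsmul_eq_mul]
        ring
      have e3 : ∑ l ∈ Finset.univ.filter (fun l : Fin n => ¬ (l:ℕ) < i), yN (l:ℕ)
          = ((n - i : ℕ) : ℝ) := by
        have : ∀ l ∈ Finset.univ.filter (fun l : Fin n => ¬ (l:ℕ) < i), yN (l:ℕ) = 1 := by
          intro l hl
          have hli := (Finset.mem_filter.mp hl).2
          rw [hyN]; dsimp only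
          split_ifs with h1 h2
          · exact absurd h2.2 hli
          · rfl
          · rfl
        rw [Finset.sum_congr rfl this, Finset.sum_const, srr_card_filter_ge n i hin,
          nsmul_eq_mul, mul_one]
      rw [e1, e2, e3, Nat.cast_sub hin]
      ring
    rw [hLHS, ← hyc]
    calc ∑ j, price j * lam j
        = ∑ j, ∑ R : Finset (Fin n), price j * w j R := by
          apply Finset.sum_congr rfl; intro j _; rw [← hwsum j, Finset.mul_sum]
      _ ≤ ∑ j, ∑ R : Finset (Fin n), (∑ l ∈ R, yN (l:ℕ)) * w j R :=
          Finset.sum_le_sum (fun j _ => Finset.sum_le_sum (fun R _ => hperterm j R))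
      _ = ∑ l : Fin n, yN (l:ℕ) *
            (∑ j, ∑ R ∈ Finset.univ.filter (fun R : Finset (Fin n) => l ∈ R), w j R) := hswap
      _ ≤ ∑ l : Fin n, yN (l:ℕ) * 1 :=
          Finset.sum_le_sum (fun l _ => mul_le_mul_of_nonneg_left (hwload l) (hy0 _))
      _ = ∑ l : Fin n, yN (l:ℕ) := by simp
  · intro hineq
    refine ⟨hlam0, ?_⟩
    have hjn' : ∀ j : Fin k, (j:ℕ) < n := fun j => lt_of_lt_of_le j.isLt hkn
    set sv : Fin k → Fin n := fun j => ⟨(j:ℕ), hjn' j⟩ with hsv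
    set dN : Fin k → ℝ := fun j => if (j:ℕ) < i then max (lam j - 1) 0 else lam j with hdN
    have hd0 : ∀ j, 0 ≤ dN j := by
      intro j; rw [hdN]; dsimp only; split_ifs
      · exact le_max_right _ _
      · exact hlam0 j
    set D : ℝ := ∑ j, dN j with hD
    have hD0 : 0 ≤ D := Finset.sum_nonneg (fun j _ => hd0 j)
    set uN : ℕ → ℝ := fun m =>
      min (if h : m < k then (if m < i then max (1 - lam ⟨m, h⟩) 0 else 1) else 1) D with huN
    have hu0 : ∀ m, 0 ≤ uN m := by
      intro m; rw [huN]; dsimp only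
      apply le_min _ hD0
      split_ifs
      · exact le_max_right _ _
      · exact zero_le_one
      · exact zero_le_one
    have huD : ∀ m, uN m ≤ D := fun m => min_le_right _ _
    set U : ℝ := ∑ l : Fin n, uN (l:ℕ) with hU
    have hU0 : 0 ≤ U := Finset.sum_nonneg (fun l _ => hu0 _)
    -- the key capacity inequality
    set PA : Finset (Fin k) := Finset.univ.filter (fun j : Fin k => (j:ℕ) < i ∧ 1 < lam j)
      with hPA
    set PB : Finset (Fin k) := Finset.univ.filter (fun j : Fin k => (j:ℕ) < i ∧ ¬ 1 < lam j)
      with hPBdef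
    set QQ : Finset (Fin k) := Finset.univ.filter (fun j : Fin k => ¬ (j:ℕ) < i) with hQQ
    have hPAsub : ∀ j ∈ PA, (j:ℕ) < i := by
      intro j hj; rw [hPA] at hj; exact (Finset.mem_filter.mp hj).2.1
    have hPAlam : ∀ j ∈ PA, 1 < lam j := by
      intro j hj; rw [hPA] at hj; exact (Finset.mem_filter.mp hj).2.2
    have hPBlam : ∀ j ∈ PB, lam j ≤ 1 := by
      intro j hj; rw [hPBdef] at hj
      exact not_lt.mp (Finset.mem_filter.mp hj).2.2
    have hPBlt : ∀ j ∈ PB, (j:ℕ) < i := by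
      intro j hj; rw [hPBdef] at hj; exact (Finset.mem_filter.mp hj).2.1
    have hcards : PA.card + PB.card = i := by
      have h2 := Finset.card_filter_add_card_filter_not
        (s := Finset.univ.filter (fun j : Fin k => (j:ℕ) < i)) (p := fun j => 1 < lam j)
      rw [Finset.filter_filter, Finset.filter_filter, srr_card_filter_lt k i hik] at h2
      rw [hPA, hPBdef]
      exact h2
    have hDsplit : D = ((∑ j ∈ PA, lam j) - PA.card) + ∑ j ∈ QQ, lam j := by
      rw [hD, ← Finset.sum_filter_add_sum_filter_not Finset.univ
        (fun j : Fin k => (j:ℕ) < i) dN]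
      have e1 : ∑ j ∈ Finset.univ.filter (fun j : Fin k => (j:ℕ) < i), dN j
          = (∑ j ∈ PA, lam j) - PA.card := by
        rw [← Finset.sum_filter_add_sum_filter_not
          (Finset.univ.filter (fun j : Fin k => (j:ℕ) < i)) (fun j => 1 < lam j) dN,
          Finset.filter_filter, Finset.filter_filter]
        have ha : ∑ j ∈ Finset.univ.filter (fun j : Fin k => (j:ℕ) < i ∧ 1 < lam j), dN j
            = (∑ j ∈ PA, lam j) - PA.card := by
          rw [← hPA]
          have : ∀ j ∈ PA, dN j = lam j - 1 := by
            intro j hj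
            rw [hdN]; dsimp only
            rw [if_pos (hPAsub j hj)]
            exact max_eq_left (by linarith [hPAlam j hj])
          rw [Finset.sum_congr rfl this, Finset.sum_sub_distrib, Finset.sum_const,
            nsmul_eq_mul, mul_one]
        have hb : ∑ j ∈ Finset.univ.filter (fun j : Fin k => (j:ℕ) < i ∧ ¬ 1 < lam j), dN j
            = 0 := by
          rw [← hPBdef]
          apply Finset.sum_eq_zero
          intro j hj
          rw [hdN]; dsimp only
          rw [if_pos (hPBlt j hj)]
          exact max_eq_right (by linarith [hPBlam j hj])
        rw [ha, hb, add_zero]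
      have e2 : ∑ j ∈ Finset.univ.filter (fun j : Fin k => ¬ (j:ℕ) < i), dN j
          = ∑ j ∈ QQ, lam j := by
        rw [← hQQ]
        apply Finset.sum_congr rfl
        intro j hj
        rw [hQQ] at hj
        rw [hdN]; dsimp only
        rw [if_neg (Finset.mem_filter.mp hj).2]
      rw [e1, e2]
    have hUsplit : U = ((∑ j ∈ PA, uN (j:ℕ)) + ∑ j ∈ PB, uN (j:ℕ))
        + ((n - i : ℕ) : ℝ) * min 1 D := by
      rw [hU, ← Finset.sum_filter_add_sum_filter_not Finset.univ
        (fun l : Fin n => (l:ℕ) < i) (fun l => uN (l:ℕ))]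
      have e1 : ∑ l ∈ Finset.univ.filter (fun l : Fin n => (l:ℕ) < i), uN (l:ℕ)
          = (∑ j ∈ PA, uN (j:ℕ)) + ∑ j ∈ PB, uN (j:ℕ) := by
        rw [srr_sum_filter_lt_eq_range n i hin uN, ← srr_sum_filter_lt_eq_range k i hik uN]
        rw [← Finset.sum_filter_add_sum_filter_not
          (Finset.univ.filter (fun j : Fin k => (j:ℕ) < i)) (fun j => 1 < lam j)
          (fun j => uN (j:ℕ)), Finset.filter_filter, Finset.filter_filter, ← hPA, ← hPBdef]
      have e2 : ∑ l ∈ Finset.univ.filter (fun l : Fin n => ¬ (l:ℕ) < i), uN (l:ℕ)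
          = ((n - i : ℕ) : ℝ) * min 1 D := by
        have hval : ∀ l ∈ Finset.univ.filter (fun l : Fin n => ¬ (l:ℕ) < i),
            uN (l:ℕ) = min 1 D := by
          intro l hl
          have hli := (Finset.mem_filter.mp hl).2
          rw [huN]; dsimp only
          by_cases h1 : (l:ℕ) < k
          · rw [dif_pos h1, if_neg hli]
          · rw [dif_neg h1]
        rw [Finset.sum_congr rfl hval, Finset.sum_const, srr_card_filter_ge n i hin,
          nsmul_eq_mul]
      rw [e1, e2]
    have hPAu : ∑ j ∈ PA, uN (j:ℕ) = 0 := by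
      apply Finset.sum_eq_zero
      intro j hj
      rw [huN]; dsimp only
      rw [dif_pos j.isLt, if_pos (hPAsub j hj), Fin.eta,
        max_eq_right (by linarith [hPAlam j hj]), min_eq_left hD0]
    have hkey : (k:ℝ) * D ≤ U := by
      have hiR : ((i:ℕ):ℝ) = (PA.card : ℝ) + (PB.card : ℝ) := by exact_mod_cast hcards.symm
      have hniR : ((n - i : ℕ) : ℝ) = (n:ℝ) - (i:ℝ) := by
        rw [Nat.cast_sub hin]
      rcases le_or_gt 1 D with h1D | h1D
      · have hmin : min 1 D = 1 := min_eq_left h1D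
        have hPBu : ∑ j ∈ PB, uN (j:ℕ) = (PB.card : ℝ) - ∑ j ∈ PB, lam j := by
          have : ∀ j ∈ PB, uN (j:ℕ) = 1 - lam j := by
            intro j hj
            rw [huN]; dsimp only
            rw [dif_pos j.isLt, if_pos (hPBlt j hj), Fin.eta,
              max_eq_left (by linarith [hPBlam j hj]),
              min_eq_left (by linarith [hlam0 j, h1D, hPBlam j hj])]
          rw [Finset.sum_congr rfl this, Finset.sum_sub_distrib, Finset.sum_const,
            nsmul_eq_mul, mul_one]
        have hq2 := hineq PA hPAsub
        have hfilterPB : Finset.univ.filter (fun j : Fin k => (j:ℕ) < i ∧ j ∉ PA) = PB := by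
          rw [hPBdef]
          apply Finset.filter_congr
          intro j _
          rw [hPA]
          simp only [Finset.mem_filter, Finset.mem_univ, true_and, not_and]
          constructor
          · rintro ⟨h1, h2⟩; exact ⟨h1, fun hgt => h2 h1 hgt⟩
          · rintro ⟨h1, h2⟩; exact ⟨h1, fun _ => h2⟩
        have hfilterQ : Finset.univ.filter (fun j : Fin k => i ≤ (j:ℕ)) = QQ := by
          rw [hQQ]; apply Finset.filter_congr; intro j _; simp [not_lt]
        rw [hfilterPB, hfilterQ] at hq2
        have hkD : (k:ℝ) * D
            = (k:ℝ) * ((∑ j ∈ PA, lam j) + ∑ j ∈ QQ, lam j) - (k:ℝ) * (PA.card : ℝ) := by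
          rw [hDsplit]; ring
        rw [hUsplit, hPAu, hPBu, hmin, hkD, hniR]
        have hcardle : (PA.card : ℝ) ≤ (i : ℝ) := by
          have : PA.card ≤ i := by omega
          exact_mod_cast this
        linarith [hq2]
      · have hmin : min 1 D = D := min_eq_right (le_of_lt h1D)
        rw [hUsplit, hPAu, hmin]
        have hPBu0 : 0 ≤ ∑ j ∈ PB, uN (j:ℕ) := Finset.sum_nonneg (fun j _ => hu0 _)
        have hkni : (k:ℝ) ≤ ((n - i : ℕ) : ℝ) := by
          have : k ≤ n - i := by omega
          exact_mod_cast this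
        nlinarith [hD0]
    -- scale down and decompose
    set rho : ℝ := if U = 0 then 0 else (k:ℝ) * D / U with hrho
    have hrho0 : 0 ≤ rho := by
      rw [hrho]; split_ifs
      · exact le_refl 0
      · exact div_nonneg (mul_nonneg (Nat.cast_nonneg k) hD0) hU0
    have hrho1 : rho ≤ 1 := by
      rw [hrho]; split_ifs with h
      · exact zero_le_one
      · rw [div_le_one (lt_of_le_of_ne hU0 (Ne.symm h))]
        exact hkey
    set v : Fin n → ℝ := fun l => rho * uN (l:ℕ) with hv
    have hv0 : ∀ l, 0 ≤ v l := fun l => mul_nonneg hrho0 (hu0 _)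
    have hvu : ∀ l : Fin n, v l ≤ uN (l:ℕ) := by
      intro l
      calc rho * uN (l:ℕ) ≤ 1 * uN (l:ℕ) := mul_le_mul_of_nonneg_right hrho1 (hu0 _)
        _ = uN (l:ℕ) := one_mul _
    have hvD : ∀ l, v l ≤ D := fun l => le_trans (hvu l) (huD _)
    have hvsum : ∑ l, v l = (k:ℝ) * D := by
      rw [hv]; dsimp only
      rw [← Finset.mul_sum, ← hU, hrho]
      split_ifs with h
      · rw [zero_mul]
        have h1 : (k:ℝ)*D ≤ 0 := h ▸ hkey
        have h2 : 0 ≤ (k:ℝ)*D := mul_nonneg (Nat.cast_nonneg k) hD0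
        linarith
      · field_simp
    obtain ⟨wts, hwts0, hwtsc, hwtsD, hwtsload⟩ := srr_decomp_aux n k
      ((Finset.univ.filter (fun l : Fin n => 0 < v l ∧ v l < D)).card) D v hD0 hv0 hvD hvsum
      le_rfl
    -- assemble the allocation
    set ww : Fin k → Finset (Fin n) → ℝ := fun j R =>
      (if (j:ℕ) < i then (if R = {sv j} then min (lam j) 1 else 0) else 0)
        + wts R * (dN j / D) with hww
    refine ⟨ww, ?_, ?_, ?_, ?_⟩
    · -- nonnegativity
      intro j R
      rw [hww]; dsimp only
      apply add_nonneg
      · split_ifs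
        · exact le_min (hlam0 j) zero_le_one
        · exact le_refl 0
        · exact le_refl 0
      · exact mul_nonneg (hwts0 R) (div_nonneg (hd0 j) hD0)
    · -- support on recovery sets
      intro j R hnot
      rw [hww]; dsimp only
      have hterm2 : wts R * (dN j / D) = 0 := by
        by_cases h3 : wts R = 0
        · rw [h3, zero_mul]
        · by_cases h4 : dN j = 0
          · rw [h4]; simp
          · exfalso
            apply hnot
            have hcardR := hwtsc R h3
            by_cases h1 : (j:ℕ) < i
            · have hl1 : 1 < lam j := by
                rw [hdN] at h4; dsimp only at h4; rw [if_pos h1] at h4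
                by_contra hle
                push_neg at hle
                exact h4 (max_eq_right (by linarith))
              have hvsv : v (sv j) = 0 := by
                rw [hv]; dsimp only
                have huj : uN ((sv j : Fin n) : ℕ) = 0 := by
                  rw [huN]; dsimp only
                  have : ((sv j : Fin n) : ℕ) = (j : ℕ) := rfl
                  rw [this, dif_pos j.isLt, if_pos h1, Fin.eta,
                    max_eq_right (by linarith), min_eq_left hD0]
                rw [huj, mul_zero]
              have hsvnot : sv j ∉ R := by
                intro hmem
                apply h3
                have hload := hwtsload (sv j)
                rw [hvsv] at hload
                exact (Finset.sum_eq_zero_iff_of_nonneg (fun R' _ => hwts0 R')).mp hload R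
                  (Finset.mem_filter.mpr ⟨Finset.mem_univ _, hmem⟩)
              apply SRRAux.recov_of_card M hsys hMDS hk1 j R hcardR
              intro _ l hl hlj
              apply hsvnot
              have : l = sv j := Fin.ext hlj
              rwa [← this]
            · exact SRRAux.recov_of_card M hsys hMDS hk1 j R hcardR
                (fun hji => absurd hji h1)
      rw [hterm2, add_zero]
      by_cases h1 : (j:ℕ) < i
      · rw [if_pos h1]
        by_cases h2 : R = {sv j}
        · exfalso
          apply hnot
          rw [h2]
          exact SRRAux.recov_singleton M hsys hMDS hk1 j h1 (hjn' j)
        · rw [if_neg h2]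
      · rw [if_neg h1]
    · -- total demand per object
      intro j
      rw [hww]; dsimp only
      rw [Finset.sum_add_distrib, ← Finset.sum_mul, hwtsD]
      have hDd : D * (dN j / D) = dN j := by
        by_cases hDz : D = 0
        · have hdj : dN j = 0 := by
            have hall := (Finset.sum_eq_zero_iff_of_nonneg
              (fun j' (_ : j' ∈ Finset.univ) => hd0 j')).mp (by rw [← hD]; exact hDz)
            exact hall j (Finset.mem_univ j)
          rw [hdj, hDz]; ring
        · field_simp
      rw [hDd]
      by_cases h1 : (j:ℕ) < i
      · rw [Finset.sum_congr rfl (fun R (_ : R ∈ Finset.univ) => if_pos h1),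
          Fintype.sum_ite_eq' ({sv j}) (fun _ => min (lam j) 1)]
        rw [hdN]; dsimp only
        rw [if_pos h1]
        rcases le_total (lam j) 1 with hle | hle
        · rw [min_eq_left hle, max_eq_right (by linarith)]; ring
        · rw [min_eq_right hle, max_eq_left (by linarith)]; ring
      · rw [Finset.sum_congr rfl (fun R (_ : R ∈ Finset.univ) => if_neg h1),
          Finset.sum_const_zero, zero_add]
        rw [hdN]; dsimp only
        rw [if_neg h1]
    · -- capacity constraints
      intro l
      have hsplit : ∀ j : Fin k, ∑ R ∈ Finset.univ.filter
            (fun R : Finset (Fin n) => l ∈ R), ww j R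
          = (if (j:ℕ) < i then (if l = sv j then min (lam j) 1 else 0) else 0)
            + v l * (dN j / D) := by
        intro j
        rw [hww]; dsimp only
        rw [Finset.sum_add_distrib, ← Finset.sum_mul, hwtsload l]
        congr 1
        by_cases h1 : (j:ℕ) < i
        · rw [if_pos h1, Finset.sum_congr rfl
            (fun R (_ : R ∈ Finset.univ.filter (fun R : Finset (Fin n) => l ∈ R)) =>
              if_pos h1)]
          rw [Finset.sum_ite_eq' (Finset.univ.filter (fun R : Finset (Fin n) => l ∈ R))
            ({sv j}) (fun _ => min (lam j) 1)]
          by_cases h2 : l = sv j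
          · rw [if_pos (by simp [h2]), if_pos h2]
          · rw [if_neg (by simp [Finset.mem_singleton]; exact fun hc => h2 hc), if_neg h2]
        · rw [if_neg h1, Finset.sum_congr rfl
            (fun R (_ : R ∈ Finset.univ.filter (fun R : Finset (Fin n) => l ∈ R)) =>
              if_neg h1), Finset.sum_const_zero]
      rw [Finset.sum_congr rfl (fun j (_ : j ∈ Finset.univ) => hsplit j),
        Finset.sum_add_distrib]
      have hsum2 : ∑ j : Fin k, v l * (dN j / D) ≤ v l := by
        rw [← Finset.mul_sum]
        have : ∑ j, dN j / D = D / D := by rw [← Finset.sum_div, ← hD]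
        rw [this]
        by_cases hDz : D = 0
        · rw [hDz]; simp [hv0 l]
        · rw [div_self hDz, mul_one]
      by_cases hl : (l:ℕ) < i
      · set j0 : Fin k := ⟨(l:ℕ), lt_of_lt_of_le hl hik⟩ with hj0
        have hsum1 : ∑ j : Fin k, (if (j:ℕ) < i then (if l = sv j then min (lam j) 1 else 0)
            else 0) = min (lam j0) 1 := by
          have hpt2 : ∀ j : Fin k, (if (j:ℕ) < i then (if l = sv j then min (lam j) 1 else 0)
              else 0) = (if j = j0 then min (lam j) 1 else 0) := by
            intro j
            by_cases h1 : (j:ℕ) < i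
            · rw [if_pos h1]
              by_cases h2 : l = sv j
              · rw [if_pos h2, if_pos]
                rw [hj0]
                apply Fin.ext
                have hval : (l:ℕ) = ((sv j : Fin n) : ℕ) := congrArg Fin.val h2
                exact hval.symm
              · rw [if_neg h2, if_neg]
                exact fun hc => h2 (Fin.ext (by rw [hc]))
            · rw [if_neg h1, if_neg]
              intro hc
              apply h1
              rw [hc]
              exact hl
          rw [Finset.sum_congr rfl (fun j _ => hpt2 j),
            Fintype.sum_ite_eq' j0 (fun j => min (lam j) 1)]
        rw [hsum1]
        have hbound : v l ≤ max (1 - lam j0) 0 := by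
          calc v l ≤ uN (l:ℕ) := hvu l
            _ ≤ max (1 - lam j0) 0 := by
              rw [huN]; dsimp only
              rw [dif_pos (lt_of_lt_of_le hl hik), if_pos hl]
              exact min_le_left _ _
        have : min (lam j0) 1 + max (1 - lam j0) 0 ≤ 1 := by
          rcases le_total (lam j0) 1 with hle | hle
          · rw [min_eq_left hle, max_eq_left (by linarith)]; linarith
          · rw [min_eq_right hle, max_eq_right (by linarith)]
            linarith [hlam0 j0]
        linarith [hsum2]
      · have hsum1 : ∑ j : Fin k, (if (j:ℕ) < i then (if l = sv j then min (lam j) 1 else 0)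
            else 0) = 0 := by
          apply Finset.sum_eq_zero
          intro j _
          by_cases h1 : (j:ℕ) < i
          · rw [if_pos h1, if_neg, ]
            intro hc
            apply hl
            rw [hc]
            exact h1
          · rw [if_neg h1]
        rw [hsum1]
        have hbound : v l ≤ 1 := by
          calc v l ≤ uN (l:ℕ) := hvu l
            _ ≤ 1 := by
              rw [huN]; dsimp only
              by_cases h1 : (l:ℕ) < k
              · rw [dif_pos h1, if_neg hl]
                exact min_le_left _ _
              · rw [dif_neg h1]
                exact min_le_left _ _
        linarith [hsum2]
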